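/- arXiv:2002.09342 — 3 statements merged into one kernel-verified Lean document; each statement's English description precedes it below -/
import Mathlib

section
/- Let X be a compact totally separated space and φ a homeomorphism. For a point x with infinite φ-orbit, the map mo_x: ⟦φ⟧ → ℤ defined by mo_x(ψ) = #(φ^{ℤ<0}(x) ∩ ψ⁻¹(φ^ℕ(x))) − #(φ^ℕ(x) ∩ ψ⁻¹(φ^{ℤ<0}(x))) is a group homomorphism, is independent of the choice of x within its orbit, and satisfies mo_x(φ) = 1 (so mo_x is surjective). -/
variable {X : Type*} [TopologicalSpace X]

instance : Group (X ≃ₜ X) where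
  mul f g := g.trans f
  one := Homeomorph.refl X
  inv := Homeomorph.symm
  mul_assoc f g h := rfl
  one_mul f := rfl
  mul_one f := rfl
  inv_mul_cancel f := by
    ext x
    exact f.symm_apply_apply x

@[simp] lemma homeo_mul_apply (f g : X ≃ₜ X) (x : X) : (f * g) x = f (g x) := rfl
@[simp] lemma homeo_one_apply (x : X) : (1 : X ≃ₜ X) x = x := rfl

/-- The topological full group of a homeomorphism `φ`. -/
def fullGroupZ (φ : X ≃ₜ X) : Subgroup (X ≃ₜ X) where
  carrier := {ψ | ∃ κ : X → ℤ, IsLocallyConstant κ ∧ ∀ x, ψ x = (φ ^ κ x) x}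
  one_mem' := ⟨0, IsLocallyConstant.const 0, fun x => by simp⟩
  mul_mem' := by
    rintro ψ₁ ψ₂ ⟨κ₁, h₁, e₁⟩ ⟨κ₂, h₂, e₂⟩
    refine ⟨fun x => κ₁ (ψ₂ x) + κ₂ x, (h₁.comp_continuous ψ₂.continuous).add h₂, fun x => ?_⟩
    rw [zpow_add]
    simp only [homeo_mul_apply]
    rw [← e₂, ← e₁]
  inv_mem' := by
    rintro ψ ⟨κ, h, e⟩
    refine ⟨fun x => -κ (ψ.symm x), (h.comp_continuous ψ.symm.continuous).neg, fun x => ?_⟩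
    have := e (ψ.symm x)
    conv_lhs => rw [show ψ⁻¹ x = ψ.symm x from rfl]
    have h2 : (φ ^ (-κ (ψ.symm x))) (ψ (ψ.symm x)) = ψ.symm x := by
      rw [this, ← homeo_mul_apply, ← zpow_add]
      simp
    rw [ψ.apply_symm_apply] at h2
    exact h2.symm

/-- The forward orbit `{φⁿ x : n ∈ ℕ}`. -/
def posOrb (φ : X ≃ₜ X) (x : X) : Set X := {y | ∃ n : ℕ, y = (φ ^ (n : ℤ)) x}

/-- The backward (strictly negative) part of the orbit. -/
def negOrb (φ : X ≃ₜ X) (x : X) : Set X := {y | ∃ n : ℤ, n < 0 ∧ y = (φ ^ n) x}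

/-- The index map `mo_x` on the topological full group. -/
noncomputable def moFn (φ : X ≃ₜ X) (x : X) (ψ : X ≃ₜ X) : ℤ :=
  ((negOrb φ x ∩ (ψ : X → X) ⁻¹' posOrb φ x).ncard : ℤ) -
    ((posOrb φ x ∩ (ψ : X → X) ⁻¹' negOrb φ x).ncard : ℤ)


open Set

/-- Relative index of two sets of integers. -/
noncomputable def relInd (A B : Set ℤ) : ℤ :=
  ((A \ B).ncard : ℤ) - ((B \ A).ncard : ℤ)

lemma ncard_diff_sub {α : Type*} {A B : Set α} (hA : A.Finite) (hB : B.Finite) :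
    ((A \ B).ncard : ℤ) - ((B \ A).ncard : ℤ) = (A.ncard : ℤ) - B.ncard := by
  have h1 := Set.ncard_inter_add_ncard_diff_eq_ncard A B hA
  have h2 := Set.ncard_inter_add_ncard_diff_eq_ncard B A hB
  rw [Set.inter_comm] at h2
  omega

lemma relInd_eq {A B S : Set ℤ} (hS : S.Finite) (hAB : A \ B ⊆ S) (hBA : B \ A ⊆ S) :
    relInd A B = ((A ∩ S).ncard : ℤ) - ((B ∩ S).ncard : ℤ) := by
  have e1 : A \ B = (A ∩ S) \ (B ∩ S) := by
    ext a
    constructor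
    · exact fun h => ⟨⟨h.1, hAB h⟩, fun hc => h.2 hc.1⟩
    · rintro ⟨⟨ha, hs⟩, hb⟩
      exact ⟨ha, fun hbb => hb ⟨hbb, hs⟩⟩
  have e2 : B \ A = (B ∩ S) \ (A ∩ S) := by
    ext a
    constructor
    · exact fun h => ⟨⟨h.1, hBA h⟩, fun hc => h.2 hc.1⟩
    · rintro ⟨⟨ha, hs⟩, hb⟩
      exact ⟨ha, fun hbb => hb ⟨hbb, hs⟩⟩
  rw [relInd, e1, e2, ncard_diff_sub (hS.inter_of_right _) (hS.inter_of_right _)]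

lemma diff_sub_union (A B C : Set ℤ) : A \ C ⊆ (A \ B) ∪ (B \ C) := by
  intro a ⟨ha, hc⟩
  by_cases h : a ∈ B
  · exact Or.inr ⟨h, hc⟩
  · exact Or.inl ⟨ha, h⟩

lemma relInd_triangle {A B C : Set ℤ} (hAB : (A \ B).Finite) (hBA : (B \ A).Finite)
    (hBC : (B \ C).Finite) (hCB : (C \ B).Finite) :
    relInd A C = relInd A B + relInd B C := by
  set S := (A \ B) ∪ (B \ A) ∪ ((B \ C) ∪ (C \ B)) with hSdef
  have hS : S.Finite := ((hAB.union hBA).union (hBC.union hCB))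
  have sub1 : A \ B ⊆ S := fun a h => Or.inl (Or.inl h)
  have sub2 : B \ A ⊆ S := fun a h => Or.inl (Or.inr h)
  have sub3 : B \ C ⊆ S := fun a h => Or.inr (Or.inl h)
  have sub4 : C \ B ⊆ S := fun a h => Or.inr (Or.inr h)
  have sub5 : A \ C ⊆ S := fun a h => (diff_sub_union A B C h).elim (fun h => sub1 h) fun h => sub3 h
  have sub6 : C \ A ⊆ S := fun a h => (diff_sub_union C B A h).elim (fun h => sub4 h) fun h => sub2 h
  rw [relInd_eq hS sub5 sub6, relInd_eq hS sub1 sub2, relInd_eq hS sub3 sub4]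
  ring

lemma relInd_preimage (σ : ℤ ≃ ℤ) (A B : Set ℤ) :
    relInd (σ ⁻¹' A) (σ ⁻¹' B) = relInd A B := by
  have key : ∀ S : Set ℤ, (σ ⁻¹' S).ncard = S.ncard := by
    intro S
    have : σ ⁻¹' S = σ.symm '' S := by
      ext a; simp [Equiv.symm_apply_eq, eq_comm]
    rw [this, Set.ncard_image_of_injective _ σ.symm.injective]
  rw [relInd, ← Set.preimage_diff, ← Set.preimage_diff, key, key, relInd]

lemma ncard_Ico_int (a b : ℤ) : (Set.Ico a b).ncard = (b - a).toNat := by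
  rw [← Finset.coe_Ico, Set.ncard_coe_finset, Int.card_Ico]

lemma relInd_Ici (a b : ℤ) : relInd (Set.Ici a) (Set.Ici b) = b - a := by
  rw [relInd, Set.Ici_diff_Ici, Set.Ici_diff_Ici, ncard_Ico_int, ncard_Ico_int]
  omega

lemma Ici_diff_finite (a b : ℤ) : (Set.Ici a \ Set.Ici b).Finite := by
  rw [Set.Ici_diff_Ici]; exact Set.finite_Ico a b

lemma sigma_diff_finite {σ : ℤ ≃ ℤ} {M : ℤ} (hM : ∀ n, |σ n - n| ≤ M) (m : ℤ) :
    ((σ ⁻¹' Set.Ici m) \ Set.Ici m).Finite ∧ ((Set.Ici m) \ (σ ⁻¹' Set.Ici m)).Finite := by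
  constructor <;>
  · apply Set.Finite.subset (Set.finite_Icc (m - M) (m + M))
    intro n hn
    have := hM n
    rw [abs_le] at this
    simp only [Set.mem_diff, Set.mem_preimage, Set.mem_Ici, Set.mem_Icc, not_le] at hn ⊢
    omega
lemma e_add (φ : X ≃ₜ X) (x : X) (a b : ℤ) : (φ ^ a) ((φ ^ b) x) = (φ ^ (a + b)) x := by
  rw [zpow_add, homeo_mul_apply]

lemma fix_zpow (g : X ≃ₜ X) (x : X) (hfix : g x = x) (k : ℤ) : (g ^ k) x = x := by
  have Fnat : ∀ n : ℕ, (g ^ n) x = x := by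
    intro n
    induction n with
    | zero => simp
    | succ n ih => rw [pow_succ, homeo_mul_apply, hfix, ih]
  obtain ⟨n, rfl | rfl⟩ := Int.eq_nat_or_neg k
  · rw [zpow_natCast]; exact Fnat n
  · rw [zpow_neg, zpow_natCast]
    show (g ^ n).symm x = x
    conv_lhs => rw [← Fnat n]
    exact (g ^ n).symm_apply_apply x

lemma e_injective (φ : X ≃ₜ X) (x : X)
    (hinf : (Set.range fun n : ℤ => (φ ^ n) x).Infinite) :
    Function.Injective fun n : ℤ => (φ ^ n) x := by
  intro a b hab
  by_contra hne
  simp only at hab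
  -- get d > 0 with (φ ^ d) x = x
  have key : ∀ d : ℤ, 0 < d → (φ ^ d) x = x → False := by
    intro d hd hfix
    apply hinf
    apply Set.Finite.subset ((Set.finite_Ico (0 : ℤ) d).image fun n => (φ ^ n) x)
    rintro y ⟨n, rfl⟩
    refine ⟨n % d, ⟨Int.emod_nonneg n hd.ne', Int.emod_lt_of_pos n hd⟩, ?_⟩
    simp only
    have hn : n % d + d * (n / d) = n := Int.emod_add_mul_ediv n d
    have : (φ ^ n) x = (φ ^ (n % d)) ((φ ^ (d * (n / d))) x) := by
      rw [e_add, hn]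
    rw [this, show (φ ^ (d * (n / d))) x = x by rw [zpow_mul]; exact fix_zpow (φ ^ d) x hfix (n / d)]
  have hfix : ∀ u v : ℤ, (φ ^ u) x = (φ ^ v) x → (φ ^ (u - v)) x = x := by
    intro u v huv
    have := congrArg (fun y => (φ ^ (-v)) y) huv
    rw [e_add, e_add] at this
    rw [show u - v = -v + u by ring]
    simpa using this
  rcases lt_or_gt_of_ne hne with h | h
  · exact key (b - a) (by omega) (hfix b a hab.symm)
  · exact key (a - b) (by omega) (hfix a b hab)

lemma exists_sigma [CompactSpace X] (φ : X ≃ₜ X) (x : X)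
    (hinj : Function.Injective fun n : ℤ => (φ ^ n) x) {ψ : X ≃ₜ X} (hψ : ψ ∈ fullGroupZ φ) :
    ∃ σ : ℤ ≃ ℤ, (∀ n : ℤ, ψ ((φ ^ n) x) = (φ ^ σ n) x) ∧ ∃ M : ℤ, ∀ n, |σ n - n| ≤ M := by
  have hψinv := (fullGroupZ φ).inv_mem hψ
  obtain ⟨κ, hκ, eκ⟩ := hψ
  obtain ⟨κ', hκ', eκ'⟩ := hψinv
  have key1 : ∀ n : ℤ, ψ ((φ ^ n) x) = (φ ^ (κ ((φ ^ n) x) + n)) x := by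
    intro n
    rw [eκ ((φ ^ n) x), e_add]
  have key2 : ∀ n : ℤ, ψ.symm ((φ ^ n) x) = (φ ^ (κ' ((φ ^ n) x) + n)) x := by
    intro n
    rw [show ψ.symm ((φ ^ n) x) = ψ⁻¹ ((φ ^ n) x) from rfl, eκ' ((φ ^ n) x), e_add]
  set f : ℤ → ℤ := fun n => κ ((φ ^ n) x) + n with hf
  set g : ℤ → ℤ := fun n => κ' ((φ ^ n) x) + n with hg
  have left : ∀ n, g (f n) = n := by
    intro n
    apply hinj
    show (φ ^ g (f n)) x = (φ ^ n) x
    rw [← key2 (f n), ← key1 n, ψ.symm_apply_apply]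
  have right : ∀ n, f (g n) = n := by
    intro n
    apply hinj
    show (φ ^ f (g n)) x = (φ ^ n) x
    rw [← key1 (g n), ← key2 n, ψ.apply_symm_apply]
  refine ⟨⟨f, g, left, right⟩, key1, ?_⟩
  have hfin : ((fun t => |t|) '' Set.range κ).Finite := (hκ.range_finite).image _
  obtain ⟨M, hM⟩ := hfin.bddAbove
  refine ⟨M, fun n => ?_⟩
  have : |κ ((φ ^ n) x)| ≤ M := hM ⟨κ ((φ ^ n) x), ⟨(φ ^ n) x, rfl⟩, rfl⟩
  simpa [hf] using this

lemma posOrb_eq (φ : X ≃ₜ X) (x : X) (m : ℤ) :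
    posOrb φ ((φ ^ m) x) = (fun n : ℤ => (φ ^ n) x) '' Set.Ici m := by
  ext y
  simp only [posOrb, Set.mem_setOf_eq, Set.mem_image, Set.mem_Ici]
  constructor
  · rintro ⟨n, rfl⟩
    exact ⟨(n : ℤ) + m, by omega, by rw [e_add]⟩
  · rintro ⟨k, hk, rfl⟩
    refine ⟨(k - m).toNat, ?_⟩
    rw [e_add, show ((k - m).toNat : ℤ) + m = k by omega]

lemma negOrb_eq (φ : X ≃ₜ X) (x : X) (m : ℤ) :
    negOrb φ ((φ ^ m) x) = (fun n : ℤ => (φ ^ n) x) '' Set.Iio m := by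
  ext y
  simp only [negOrb, Set.mem_setOf_eq, Set.mem_image, Set.mem_Iio]
  constructor
  · rintro ⟨n, hn, rfl⟩
    exact ⟨n + m, by omega, by rw [e_add]⟩
  · rintro ⟨k, hk, rfl⟩
    refine ⟨k - m, by omega, ?_⟩
    rw [e_add, show k - m + m = k by omega]

lemma moFn_eq (φ : X ≃ₜ X) (x : X)
    (hinj : Function.Injective fun n : ℤ => (φ ^ n) x) (ψ : X ≃ₜ X) (σ : ℤ ≃ ℤ)
    (hσ : ∀ n : ℤ, ψ ((φ ^ n) x) = (φ ^ σ n) x) (m : ℤ) :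
    moFn φ ((φ ^ m) x) ψ = relInd (σ ⁻¹' Set.Ici m) (Set.Ici m) := by
  set e : ℤ → X := fun n => (φ ^ n) x with he
  have im1 : negOrb φ ((φ ^ m) x) ∩ (ψ : X → X) ⁻¹' posOrb φ ((φ ^ m) x)
      = e '' ((σ ⁻¹' Set.Ici m) \ Set.Ici m) := by
    rw [posOrb_eq, negOrb_eq]
    ext y
    simp only [Set.mem_inter_iff, Set.mem_preimage, Set.mem_image, Set.mem_diff,
      Set.mem_Iio, Set.mem_Ici, Set.mem_preimage]
    constructor
    · rintro ⟨⟨k, hk, rfl⟩, n, hn, hyn⟩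
      refine ⟨k, ⟨?_, by omega⟩, rfl⟩
      have : e (σ k) = e n := by rw [he]; simp only; rw [← hσ k, hyn]
      have := hinj this
      omega
    · rintro ⟨k, ⟨hk1, hk2⟩, rfl⟩
      exact ⟨⟨k, by omega, rfl⟩, σ k, hk1, (hσ k).symm⟩
  have im2 : posOrb φ ((φ ^ m) x) ∩ (ψ : X → X) ⁻¹' negOrb φ ((φ ^ m) x)
      = e '' (Set.Ici m \ (σ ⁻¹' Set.Ici m)) := by
    rw [posOrb_eq, negOrb_eq]
    ext y
    simp only [Set.mem_inter_iff, Set.mem_preimage, Set.mem_image, Set.mem_diff,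
      Set.mem_Iio, Set.mem_Ici, Set.mem_preimage, not_le]
    constructor
    · rintro ⟨⟨k, hk, rfl⟩, n, hn, hyn⟩
      refine ⟨k, ⟨hk, ?_⟩, rfl⟩
      have : e (σ k) = e n := by rw [he]; simp only; rw [← hσ k, hyn]
      have := hinj this
      omega
    · rintro ⟨k, ⟨hk1, hk2⟩, rfl⟩
      exact ⟨⟨k, hk1, rfl⟩, σ k, by omega, (hσ k).symm⟩
  rw [moFn, im1, im2, Set.ncard_image_of_injective _ hinj,
    Set.ncard_image_of_injective _ hinj, relInd]

/-- for a point `x` with infinite orbit, `mo_x` is a group homomorphism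
on the topological full group, independent of the choice of the base point within the
orbit, and sends `φ` to `1` (hence is surjective). -/
theorem statement12 [CompactSpace X] [TotallySeparatedSpace X] (φ : X ≃ₜ X) (x : X)
    (hinf : (Set.range fun n : ℤ => (φ ^ n) x).Infinite) :
    (∀ ψ₁ ψ₂ : X ≃ₜ X, ψ₁ ∈ fullGroupZ φ → ψ₂ ∈ fullGroupZ φ →
      moFn φ x (ψ₁ * ψ₂) = moFn φ x ψ₁ + moFn φ x ψ₂) ∧
    (∀ m : ℤ, ∀ ψ ∈ fullGroupZ φ, moFn φ ((φ ^ m) x) ψ = moFn φ x ψ) ∧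
    moFn φ x φ = 1 ∧
    Function.Surjective fun ψ : ↥(fullGroupZ φ) => moFn φ x (ψ : X ≃ₜ X) := by
  have hinj := e_injective φ x hinf
  -- translate moFn at a shifted basepoint into relInd
  have key : ∀ (ψ : X ≃ₜ X) (σ : ℤ ≃ ℤ), (∀ n : ℤ, ψ ((φ ^ n) x) = (φ ^ σ n) x) →
      moFn φ x ψ = relInd (σ ⁻¹' Set.Ici 0) (Set.Ici 0) := by
    intro ψ σ hσ
    have := moFn_eq φ x hinj ψ σ hσ 0
    simpa using this
  have hφmem : ∀ m : ℤ, φ ^ m ∈ fullGroupZ φ := fun m =>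
    ⟨fun _ => m, IsLocallyConstant.const m, fun y => rfl⟩
  have hφσ : ∀ m n : ℤ, (φ ^ m) ((φ ^ n) x) = (φ ^ (Equiv.addLeft m) n) x := fun m n =>
    e_add φ x m n
  have hpow : ∀ m : ℤ, moFn φ x (φ ^ m) = m := by
    intro m
    rw [key (φ ^ m) (Equiv.addLeft m) (hφσ m)]
    have : (Equiv.addLeft m) ⁻¹' Set.Ici (0 : ℤ) = Set.Ici (-m) := by
      ext n
      simp only [Set.mem_preimage, Equiv.coe_addLeft, Set.mem_Ici]
      omega
    rw [this, relInd_Ici]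
    omega
  refine ⟨?_, ?_, ?_, ?_⟩
  · -- homomorphism
    intro ψ₁ ψ₂ h₁ h₂
    obtain ⟨σ₁, hσ₁, M₁, hM₁⟩ := exists_sigma φ x hinj h₁
    obtain ⟨σ₂, hσ₂, M₂, hM₂⟩ := exists_sigma φ x hinj h₂
    have hσ : ∀ n : ℤ, (ψ₁ * ψ₂) ((φ ^ n) x) = (φ ^ (σ₂.trans σ₁) n) x := by
      intro n
      rw [homeo_mul_apply, hσ₂, hσ₁]
      rfl
    rw [key _ _ hσ, key _ _ hσ₁, key _ _ hσ₂]
    have hpre : (σ₂.trans σ₁) ⁻¹' Set.Ici (0 : ℤ) = σ₂ ⁻¹' (σ₁ ⁻¹' Set.Ici 0) := rfl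
    obtain ⟨f1, f2⟩ := sigma_diff_finite hM₁ 0
    obtain ⟨g1, g2⟩ := sigma_diff_finite hM₂ 0
    have hAB : (σ₂ ⁻¹' (σ₁ ⁻¹' Set.Ici 0) \ σ₂ ⁻¹' Set.Ici 0).Finite := by
      rw [← Set.preimage_diff]
      exact (f1.preimage (σ₂.injective.injOn))
    have hBA : (σ₂ ⁻¹' Set.Ici 0 \ σ₂ ⁻¹' (σ₁ ⁻¹' Set.Ici 0)).Finite := by
      rw [← Set.preimage_diff]
      exact (f2.preimage (σ₂.injective.injOn))
    rw [hpre, relInd_triangle hAB hBA g1 g2, relInd_preimage σ₂]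
  · -- basepoint independence
    intro m ψ hψ
    obtain ⟨σ, hσ, M, hM⟩ := exists_sigma φ x hinj hψ
    rw [moFn_eq φ x hinj ψ σ hσ m, key ψ σ hσ]
    obtain ⟨f1, f2⟩ := sigma_diff_finite hM 0
    obtain ⟨fm1, fm2⟩ := sigma_diff_finite hM m
    have hIm0 : (Set.Ici m \ Set.Ici (0 : ℤ)).Finite := Ici_diff_finite m 0
    have hI0m : (Set.Ici (0 : ℤ) \ Set.Ici m).Finite := Ici_diff_finite 0 m
    have hA1 : ((σ ⁻¹' Set.Ici m) \ (σ ⁻¹' Set.Ici 0)).Finite := by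
      rw [← Set.preimage_diff]; exact hIm0.preimage (σ.injective.injOn)
    have hA2 : ((σ ⁻¹' Set.Ici 0) \ (σ ⁻¹' Set.Ici m)).Finite := by
      rw [← Set.preimage_diff]; exact hI0m.preimage (σ.injective.injOn)
    have hB1 : ((σ ⁻¹' Set.Ici 0) \ Set.Ici m).Finite :=
      Set.Finite.subset (f1.union hI0m) (diff_sub_union _ (Set.Ici 0) _)
    have hB2 : (Set.Ici m \ (σ ⁻¹' Set.Ici 0)).Finite :=
      Set.Finite.subset (hIm0.union f2) (diff_sub_union _ (Set.Ici 0) _)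
    rw [relInd_triangle hA1 hA2 hB1 hB2, relInd_triangle f1 f2 hI0m hIm0,
      relInd_preimage σ, relInd_Ici, relInd_Ici]
    ring
  · -- moFn φ x φ = 1
    have := hpow 1
    rwa [zpow_one] at this
  · -- surjectivity
    intro m
    exact ⟨⟨φ ^ m, hφmem m⟩, hpow m⟩
end

section
/- Let X be a compact totally separated space and φ a minimal homeomorphism. Then for every x ∈ X, the stabilizer in ⟦φ⟧ of the forward orbit {φⁿ(x) : n ≥ 0} is a locally finite group (every finitely generated subgroup is finite). -/
variable {X : Type*} [TopologicalSpace X]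

section PutnamAux

/-- The orbit map `n ↦ φⁿ x`. -/
noncomputable def om (φ : X ≃ₜ X) (x : X) : ℤ → X := fun n => (φ ^ n) x

lemma om_add (φ : X ≃ₜ X) (x : X) (a b : ℤ) : om φ x (a + b) = (φ ^ a) (om φ x b) := by
  simp [om, zpow_add]

/-- The displacement of `g` along the orbit of `x`. -/
noncomputable def del (φ : X ≃ₜ X) (x : X) (g : X ≃ₜ X) (n : ℤ) : ℤ :=
  Function.invFun (om φ x) (g (om φ x n)) - n

lemma del_spec {φ : X ≃ₜ X} {x : X} {g : X ≃ₜ X} (hg : g ∈ fullGroupZ φ) (n : ℤ) :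
    g (om φ x n) = om φ x (n + del φ x g n) := by
  obtain ⟨κ, -, hκ⟩ := hg
  have hmem : ∃ m, om φ x m = g (om φ x n) :=
    ⟨κ (om φ x n) + n, by rw [om_add]; exact (hκ _).symm⟩
  have h1 := Function.invFun_eq hmem
  have h2 : n + del φ x g n = Function.invFun (om φ x) (g (om φ x n)) := by
    unfold del; ring
  rw [h2, h1]

lemma del_eq {φ : X ≃ₜ X} {x : X} {g : X ≃ₜ X} (hinj : Function.Injective (om φ x))
    (hg : g ∈ fullGroupZ φ) {n d : ℤ} (h : g (om φ x n) = om φ x (n + d)) :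
    del φ x g n = d := by
  have h2 := h.symm.trans (del_spec hg n)
  have := hinj h2
  omega

lemma del_one {φ : X ≃ₜ X} {x : X} (hinj : Function.Injective (om φ x)) (n : ℤ) :
    del φ x (1 : X ≃ₜ X) n = 0 :=
  del_eq hinj (one_mem _) (by simp)

lemma del_mul {φ : X ≃ₜ X} {x : X} {a b : X ≃ₜ X} (hinj : Function.Injective (om φ x))
    (ha : a ∈ fullGroupZ φ) (hb : b ∈ fullGroupZ φ) (n : ℤ) :
    del φ x (a * b) n = del φ x b n + del φ x a (n + del φ x b n) :=
  del_eq hinj (mul_mem ha hb)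
    (by rw [homeo_mul_apply, del_spec hb, del_spec ha, ← add_assoc])

lemma del_inv {φ : X ≃ₜ X} {x : X} {a : X ≃ₜ X} (hinj : Function.Injective (om φ x))
    (ha : a ∈ fullGroupZ φ) (n : ℤ) :
    del φ x a (n + del φ x a⁻¹ n) = - del φ x a⁻¹ n := by
  have h1 := del_spec (x := x) (inv_mem ha) n
  have h2 := del_spec (x := x) ha (n + del φ x a⁻¹ n)
  rw [← h1] at h2
  have h3 : a ((a⁻¹ : X ≃ₜ X) (om φ x n)) = om φ x n := a.apply_symm_apply _
  rw [h3] at h2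
  have := hinj h2
  omega

end PutnamAux
section PutnamAux2
variable {X : Type*} [TopologicalSpace X]

lemma om_inj [T2Space X] [Infinite X] {φ : X ≃ₜ X} {x : X}
    (hd : Dense (Set.range fun n : ℤ => (φ ^ n) x)) : Function.Injective (om φ x) := by
  intro a b hab
  by_contra hne
  set p := b - a with hp
  have hpne : p ≠ 0 := sub_ne_zero.mpr fun h => hne h.symm
  have key : om φ x p = x := by
    have h1 : om φ x (-a + b) = (φ ^ (-a)) (om φ x b) := om_add φ x (-a) b
    rw [← hab, ← om_add φ x (-a) a] at h1
    have h2 : -a + a = (0 : ℤ) := by ring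
    rw [h2] at h1
    have h3 : p = -a + b := by rw [hp]; ring
    rw [h3, h1]
    simp [om]
  have hnegfix : om φ x (-p) = x := by
    have h1 : om φ x (-p + p) = (φ ^ (-p)) (om φ x p) := om_add φ x (-p) p
    rw [key] at h1
    have h2 : -p + p = (0 : ℤ) := by ring
    rw [h2] at h1
    have h3 : om φ x 0 = x := by simp [om]
    rw [h3] at h1
    exact h1.symm
  set q := |p| with hq
  have hqpos : 0 < q := abs_pos.mpr hpne
  have hqfix : om φ x q = x := by
    rcases abs_choice p with h | h
    · rw [hq, h]; exact key
    · rw [hq, h]; exact hnegfix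
  have hψ : (φ ^ q) x = x := hqfix
  have hper : ∀ k : ℤ, ((φ ^ q) ^ k) x = x := by
    intro k
    induction k using Int.induction_on with
    | zero => simp
    | succ i ih =>
      rw [zpow_add_one, homeo_mul_apply, hψ, ih]
    | pred i ih =>
      rw [zpow_sub_one, homeo_mul_apply]
      have hinv : ((φ ^ q)⁻¹ : X ≃ₜ X) x = x := by
        conv_lhs => rw [← hψ]
        rw [← homeo_mul_apply, inv_mul_cancel, homeo_one_apply]
      rw [hinv, ih]
  have hmod : ∀ n : ℤ, om φ x n = om φ x (n % q) := by
    intro n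
    conv_lhs => rw [← Int.emod_add_mul_ediv n q]
    rw [om_add]
    have h1 : om φ x (q * (n / q)) = x := by
      show (φ ^ (q * (n / q))) x = x
      rw [zpow_mul]
      exact hper (n / q)
    rw [h1]
    rfl
  have hsub : Set.range (om φ x) ⊆ om φ x '' Set.Icc 0 (q - 1) := by
    rintro _ ⟨n, rfl⟩
    refine ⟨n % q, ⟨Int.emod_nonneg n hqpos.ne', ?_⟩, (hmod n).symm⟩
    have := Int.emod_lt_of_pos n hqpos
    omega
  have hfin : (om φ x '' Set.Icc 0 (q - 1)).Finite := (Set.finite_Icc _ _).image _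
  have hdense : Dense (om φ x '' Set.Icc 0 (q - 1)) := Dense.mono hsub hd
  have huniv : om φ x '' Set.Icc 0 (q - 1) = Set.univ := by
    rw [← hfin.isClosed.closure_eq]
    exact hdense.closure_eq
  have : (Set.univ : Set X).Finite := huniv ▸ hfin
  haveI : Finite X := Set.finite_univ_iff.mp this
  exact not_finite X

lemma finite_aux {G : Type*} [Group G] (S : Subgroup G) (D : G → ℤ → ℤ)
    (T : Type*) [Finite T] (typ : ℤ → T) (B : ℤ)
    (htyp : ∀ g ∈ S, ∀ n n' : ℤ, typ n = typ n' → D g n = D g n')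
    (hbd : ∀ g ∈ S, ∀ n : ℤ, D g n ∈ Finset.Icc (-B) B)
    (hDinj : ∀ g ∈ S, ∀ g' ∈ S, (∀ n, D g n = D g' n) → g = g') :
    (S : Set G).Finite := by
  haveI : Finite ↥(S : Set G) := by
    refine Finite.of_injective
      (fun g : ↥(S : Set G) => fun t : T =>
        (⟨D g.1 (Function.invFun typ t), hbd g.1 g.2 _⟩ : ↥(Finset.Icc (-B) B))) ?_
    intro g g' h
    apply Subtype.ext
    apply hDinj _ g.2 _ g'.2
    intro n
    have h1 : typ (Function.invFun typ (typ n)) = typ n := Function.invFun_eq ⟨n, rfl⟩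
    have h2 := congrFun h (typ n)
    rw [Subtype.ext_iff] at h2
    calc D g.1 n = D g.1 (Function.invFun typ (typ n)) := htyp _ g.2 _ _ h1.symm
      _ = D g'.1 (Function.invFun typ (typ n)) := h2
      _ = D g'.1 n := htyp _ g'.2 _ _ h1
  exact Set.toFinite _

end PutnamAux2
section PutnamAux3
variable {X : Type*} [TopologicalSpace X]

lemma mem_closure_props {φ : X ≃ₜ X} {x : X} {s : Finset (X ≃ₜ X)} {R : Set ℤ}
    (hinj : Function.Injective (om φ x))
    (hmem : ∀ f ∈ s, f ∈ fullGroupZ φ)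
    (hcut : ∀ f ∈ s, ∀ m ∈ R, ∀ n : ℤ, n < m ↔ n + del φ x f n < m) :
    ∀ g ∈ Subgroup.closure (↑s : Set (X ≃ₜ X)),
      g ∈ fullGroupZ φ ∧
      (∀ m ∈ R, ∀ n : ℤ, n < m ↔ n + del φ x g n < m) ∧
      (∀ p p' ℓ : ℤ, p ∈ R → p' ∈ R → p + ℓ ∈ R → p' + ℓ ∈ R →
        (∀ f ∈ s, ∀ j : ℤ, 0 ≤ j → j < ℓ → del φ x f (p + j) = del φ x f (p' + j)) →
        ∀ j : ℤ, 0 ≤ j → j < ℓ → del φ x g (p + j) = del φ x g (p' + j)) := by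
  intro g hg
  refine Subgroup.closure_induction (fun f hf => ?_) ?_ (fun a b _ _ iha ihb => ?_)
    (fun a _ iha => ?_) hg
  · -- generator
    have hfs : f ∈ s := hf
    exact ⟨hmem f hfs, hcut f hfs,
      fun p p' ℓ _ _ _ _ hpat j hj1 hj2 => hpat f hfs j hj1 hj2⟩
  · -- one
    refine ⟨one_mem _, ?_, ?_⟩
    · intro m _ n
      rw [del_one hinj]
      omega
    · intro p p' ℓ _ _ _ _ _ j _ _
      rw [del_one hinj, del_one hinj]
  · -- mul
    obtain ⟨haf, hac, hab⟩ := iha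
    obtain ⟨hbf, hbc, hbb⟩ := ihb
    refine ⟨mul_mem haf hbf, ?_, ?_⟩
    · intro m hm n
      have hcomp := del_mul hinj haf hbf n
      have h1 := hbc m hm n
      have h2 := hac m hm (n + del φ x b n)
      omega
    · intro p p' ℓ hp hp' hpe hp'e hpat j hj1 hj2
      set e := del φ x b (p + j) with he
      have he' : del φ x b (p' + j) = e := (hbb p p' ℓ hp hp' hpe hp'e hpat j hj1 hj2).symm
      have hb1 := hbc p hp (p + j)
      have hb2 := hbc (p + ℓ) hpe (p + j)
      have hbound1 : 0 ≤ j + e := by omega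
      have hbound2 : j + e < ℓ := by omega
      have ha' := hab p p' ℓ hp hp' hpe hp'e hpat (j + e) hbound1 hbound2
      rw [del_mul hinj haf hbf, del_mul hinj haf hbf, he', ← he]
      have harg : p + j + e = p + (j + e) := by ring
      have harg2 : p' + j + e = p' + (j + e) := by ring
      rw [harg, harg2, ha']
  · -- inv
    obtain ⟨haf, hac, hab⟩ := iha
    have hacInv : ∀ m ∈ R, ∀ n : ℤ, n < m ↔ n + del φ x a⁻¹ n < m := by
      intro m hm n
      have hrel := del_inv (x := x) hinj haf n
      have h := hac m hm (n + del φ x a⁻¹ n)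
      omega
    refine ⟨inv_mem haf, hacInv, ?_⟩
    intro p p' ℓ hp hp' hpe hp'e hpat j hj1 hj2
    set e := del φ x a⁻¹ (p + j) with he
    have hb1 := hacInv p hp (p + j)
    have hb2 := hacInv (p + ℓ) hpe (p + j)
    have hbound1 : 0 ≤ j + e := by omega
    have hbound2 : j + e < ℓ := by omega
    have hrel : del φ x a (p + j + e) = -e := del_inv (x := x) hinj haf (p + j)
    have hblk := hab p p' ℓ hp hp' hpe hp'e hpat (j + e) hbound1 hbound2
    have harg : p + (j + e) = p + j + e := by ring
    rw [harg, hrel] at hblk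
    -- hblk : -e = del φ x a (p' + (j + e))
    have hspec := del_spec (x := x) haf (p' + (j + e))
    rw [← hblk] at hspec
    have hargeq : p' + (j + e) + -e = p' + j := by ring
    rw [hargeq] at hspec
    -- hspec : a (om (p' + (j+e))) = om (p' + j)
    have hinvspec : (a⁻¹ : X ≃ₜ X) (om φ x (p' + j)) = om φ x (p' + j + e) := by
      rw [← hspec]
      have h3 : (a⁻¹ : X ≃ₜ X) (a (om φ x (p' + (j + e)))) = om φ x (p' + (j + e)) :=
        a.symm_apply_apply _
      rw [h3]
      congr 1
      ring
    have : del φ x a⁻¹ (p' + j) = e :=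
      del_eq hinj (inv_mem haf) (by rw [hinvspec])
    rw [this]

end PutnamAux3

/-- Putnam's lemma: for a minimal homeomorphism `φ` of a compact totally
separated space, the stabilizer in the topological full group of the forward orbit of any
point is locally finite: any finite set of elements of the full group preserving the
forward orbit generates a finite subgroup. -/
theorem statement14 [CompactSpace X] [TotallySeparatedSpace X] (φ : X ≃ₜ X)
    (hmin : ∀ x : X, Dense (Set.range fun n : ℤ => (φ ^ n) x)) (x : X)
    (s : Finset (X ≃ₜ X))
    (hs : ∀ f ∈ s, f ∈ fullGroupZ φ ∧
      (f : X → X) '' {y | ∃ n : ℕ, y = (φ ^ (n : ℤ)) x} = {y | ∃ n : ℕ, y = (φ ^ (n : ℤ)) x}) :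
    ((Subgroup.closure (↑s : Set (X ≃ₜ X)) : Subgroup (X ≃ₜ X)) : Set (X ≃ₜ X)).Finite := by
  classical
  haveI : T2Space X := by
    refine ⟨fun a b hab => ?_⟩
    obtain ⟨U, hU, haU, hbU⟩ := exists_isClopen_of_totally_separated hab
    exact ⟨U, Uᶜ, hU.2, hU.compl.2, haU, hbU, disjoint_compl_right⟩
  cases finite_or_infinite X with
  | inl hfin =>
    haveI : Finite (X ≃ₜ X) :=
      Finite.of_injective (fun f : X ≃ₜ X => (f : X → X))
        (fun f g h => Homeomorph.ext (congrFun h))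
    exact Set.toFinite _
  | inr hinf =>
    have hinj : Function.Injective (om φ x) := om_inj (hmin x)
    -- the forward orbit
    set O : Set X := {y | ∃ n : ℕ, y = (φ ^ (n : ℤ)) x} with hOdef
    have hOmem : ∀ j : ℤ, om φ x j ∈ O ↔ 0 ≤ j := by
      intro j
      constructor
      · rintro ⟨n, hn⟩
        have : om φ x j = om φ x (n : ℤ) := hn
        rw [hinj this]
        exact Int.ofNat_nonneg n
      · intro hj
        exact ⟨j.toNat, by rw [Int.toNat_of_nonneg hj]; rfl⟩
    -- exponents of the generators
    have hsk : ∀ f ∈ s, ∃ κ : X → ℤ, IsLocallyConstant κ ∧ ∀ y, f y = (φ ^ κ y) y :=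
      fun f hf => (hs f hf).1
    choose! κ hκlc hκeq using hsk
    -- uniform bound on the generators' exponents
    have hbound : ∀ f ∈ s, ∃ M : ℕ, ∀ y : X, |κ f y| ≤ (M : ℤ) := by
      intro f hf
      have hfin2 : (Set.range (κ f)).Finite := (hκlc f hf).range_finite
      obtain ⟨C, hC⟩ := hfin2.bddAbove
      obtain ⟨c, hc⟩ := hfin2.bddBelow
      refine ⟨(max C (-c)).toNat, fun y => ?_⟩
      have h1 : κ f y ≤ C := hC ⟨y, rfl⟩
      have h2 : c ≤ κ f y := hc ⟨y, rfl⟩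
      have h3 := Int.self_le_toNat (max C (-c))
      have h4 := le_max_left C (-c)
      have h5 := le_max_right C (-c)
      rw [abs_le]
      omega
    choose! Mf hMf using hbound
    set N : ℕ := s.sup Mf with hNdef
    have hN : ∀ f ∈ s, ∀ y : X, |κ f y| ≤ (N : ℤ) := by
      intro f hf y
      refine le_trans (hMf f hf y) ?_
      exact_mod_cast Finset.le_sup hf
    -- δ of generators is κ
    have hδgen : ∀ f ∈ s, ∀ n : ℤ, del φ x f n = κ f (om φ x n) := by
      intro f hf n
      refine del_eq hinj (hs f hf).1 ?_
      rw [hκeq f hf (om φ x n), add_comm, om_add]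
    have hδN : ∀ f ∈ s, ∀ p : ℤ, del φ x f p ∈ Finset.Icc (-(N : ℤ)) (N : ℤ) := by
      intro f hf p
      rw [hδgen f hf, Finset.mem_Icc, ← abs_le]
      exact hN f hf _
    -- the window set W
    set W : Set X :=
      ⋂ f ∈ s, ⋂ j ∈ Finset.Icc (-(N : ℤ)) (N : ℤ), {y | κ f ((φ ^ j) y) = κ f ((φ ^ j) x)}
      with hWdef
    have hWopen : IsOpen W := by
      refine isOpen_biInter_finset fun f hf => ?_
      refine isOpen_biInter_finset fun j _ => ?_
      exact ((hκlc f hf).isOpen_fiber (κ f ((φ ^ j) x))).preimage (φ ^ j).continuous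
    have hxW : x ∈ W := by
      rw [hWdef]
      simp only [Set.mem_iInter, Set.mem_setOf_eq]
      intro f _ j _
      trivial
    -- every point visits W
    have hcover : ∀ y : X, ∃ n : ℤ, (φ ^ n) y ∈ W := by
      intro y
      obtain ⟨_, ⟨n, rfl⟩, hn⟩ := (hmin y).exists_mem_open hWopen ⟨x, hxW⟩
      exact ⟨n, hn⟩
    -- finite subcover: syndetic visits
    obtain ⟨F, hF⟩ := IsCompact.elim_finite_subcover isCompact_univ
      (fun n : ℤ => (φ ^ n : X ≃ₜ X) ⁻¹' W)
      (fun n => hWopen.preimage (φ ^ n).continuous)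
      (by intro y _; obtain ⟨n, hn⟩ := hcover y; exact Set.mem_iUnion.mpr ⟨n, hn⟩)
    have hFne : F.Nonempty := by
      have hx2 := hF (Set.mem_univ x)
      rw [Set.mem_iUnion₂] at hx2
      obtain ⟨n, hn, -⟩ := hx2
      exact ⟨n, hn⟩
    set B : ℤ := F.max' hFne - F.min' hFne + 1 with hBdef
    have hBpos : 0 < B := by
      have := F.min'_le _ (F.max'_mem hFne)
      omega
    have hsynd : ∀ m : ℤ, ∃ k : ℤ, m < k ∧ k ≤ m + B ∧ (φ ^ k) x ∈ W := by
      intro m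
      have hy := hF (Set.mem_univ ((φ ^ (m + 1 - F.min' hFne)) x))
      rw [Set.mem_iUnion₂] at hy
      obtain ⟨n, hnF, hn⟩ := hy
      refine ⟨n + (m + 1 - F.min' hFne), ?_, ?_, ?_⟩
      · have := F.min'_le n hnF
        omega
      · have := F.le_max' n hnF
        omega
      · have := om_add φ x n (m + 1 - F.min' hFne)
        rw [hWdef] at hn ⊢
        show om φ x (n + (m + 1 - F.min' hFne)) ∈ _
        rw [this]
        exact hn
    -- cut functions
    have hbcex : ∀ n : ℤ, ∃ b : ℤ, n - B < b ∧ b ≤ n ∧ (φ ^ b) x ∈ W := by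
      intro n
      obtain ⟨k, h1, h2, h3⟩ := hsynd (n - B)
      exact ⟨k, h1, by omega, h3⟩
    choose bc hbc1 hbc2 hbc3 using hbcex
    choose nc hnc1 hnc2 hnc3 using hsynd
    -- the cut set
    set R : Set ℤ := {m : ℤ | (φ ^ m) x ∈ W} with hRdef
    -- window property
    have hwin : ∀ m ∈ R, ∀ f ∈ s, ∀ j : ℤ, -(N : ℤ) ≤ j → j ≤ (N : ℤ) →
        del φ x f (m + j) = del φ x f j := by
      intro m hm f hf j hj1 hj2
      rw [hδgen f hf, hδgen f hf]
      have harg : om φ x (m + j) = (φ ^ j) ((φ ^ m) x) := by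
        rw [add_comm]
        exact om_add φ x j m
      rw [harg]
      have hm2 : (φ ^ m) x ∈ W := hm
      rw [hWdef] at hm2
      simp only [Set.mem_iInter, Set.mem_setOf_eq] at hm2
      have := hm2 f hf j (Finset.mem_Icc.mpr ⟨hj1, hj2⟩)
      rw [this]
      rfl
    -- generators preserve the positive half-orbit
    have hO_img : ∀ f ∈ s, f '' O = O := fun f hf => (hs f hf).2
    have hcut0 : ∀ f ∈ s, ∀ j : ℤ, 0 ≤ j ↔ 0 ≤ j + del φ x f j := by
      intro f hf j
      constructor
      · intro hj
        have h1 : f (om φ x j) ∈ O := by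
          rw [← hO_img f hf]
          exact ⟨om φ x j, (hOmem j).2 hj, rfl⟩
        rw [del_spec (x := x) (hs f hf).1 j] at h1
        exact (hOmem _).1 h1
      · intro hj
        by_contra hneg
        have h1 : f (om φ x j) ∈ O := by
          rw [del_spec (x := x) (hs f hf).1 j]
          exact (hOmem _).2 hj
        rw [← hO_img f hf] at h1
        obtain ⟨z, hz, hfz⟩ := h1
        have hzeq : z = om φ x j := f.injective hfz
        rw [hzeq] at hz
        exact hneg ((hOmem j).1 hz)
    -- generators respect every cut in R
    have hcutm : ∀ f ∈ s, ∀ m ∈ R, ∀ n : ℤ, n < m ↔ n + del φ x f n < m := by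
      intro f hf m hm n
      have hb : |del φ x f n| ≤ (N : ℤ) := by
        rw [hδgen f hf]; exact hN f hf _
      rw [abs_le] at hb
      by_cases h1 : n < m - N
      · constructor <;> intro <;> omega
      · by_cases h2 : m + N ≤ n
        · constructor <;> intro <;> omega
        · have hj1 : -(N : ℤ) ≤ n - m := by omega
          have hj2 : n - m ≤ (N : ℤ) := by omega
          have hw := hwin m hm f hf (n - m) hj1 hj2
          have harg : m + (n - m) = n := by ring
          rw [harg] at hw
          have h0 := hcut0 f hf (n - m)
          omega
    -- everything in the closure respects cuts and block types
    have hK := mem_closure_props hinj (fun f hf => (hs f hf).1) hcutm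
    -- apply the abstract finiteness lemma
    refine finite_aux (Subgroup.closure (↑s : Set (X ≃ₜ X))) (del φ x)
      (↥(Finset.Icc (0 : ℤ) B) × ↥(Finset.Icc (0 : ℤ) (2 * B)) ×
        (↥s → ↥(Finset.Icc (0 : ℤ) (2 * B)) → ↥(Finset.Icc (-(N : ℤ)) (N : ℤ))))
      (fun n => ⟨⟨n - bc n, Finset.mem_Icc.mpr ⟨by have := hbc2 n; omega,
          by have := hbc1 n; omega⟩⟩,
        ⟨nc n - bc n, Finset.mem_Icc.mpr ⟨by have := hbc2 n; have := hnc1 n; omega,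
          by have := hbc1 n; have := hnc2 n; omega⟩⟩,
        fun f j => ⟨del φ x (f : X ≃ₜ X) (bc n + (j : ℤ)), hδN f.1 f.2 _⟩⟩)
      B ?_ ?_ ?_
    · -- htyp
      intro g hg n n' h
      have e1 : n - bc n = n' - bc n' :=
        congrArg (fun t : ↥(Finset.Icc (0 : ℤ) B) × ↥(Finset.Icc (0 : ℤ) (2 * B)) ×
          (↥s → ↥(Finset.Icc (0 : ℤ) (2 * B)) → ↥(Finset.Icc (-(N : ℤ)) (N : ℤ))) =>
          (t.1 : ℤ)) h
      have e2 : nc n - bc n = nc n' - bc n' :=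
        congrArg (fun t : ↥(Finset.Icc (0 : ℤ) B) × ↥(Finset.Icc (0 : ℤ) (2 * B)) ×
          (↥s → ↥(Finset.Icc (0 : ℤ) (2 * B)) → ↥(Finset.Icc (-(N : ℤ)) (N : ℤ))) =>
          (t.2.1 : ℤ)) h
      have e3 : ∀ (f : ↥s) (j : ↥(Finset.Icc (0 : ℤ) (2 * B))),
          del φ x (f : X ≃ₜ X) (bc n + (j : ℤ)) = del φ x (f : X ≃ₜ X) (bc n' + (j : ℤ)) :=
        fun f j => congrArg (fun t : ↥(Finset.Icc (0 : ℤ) B) × ↥(Finset.Icc (0 : ℤ) (2 * B)) ×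
          (↥s → ↥(Finset.Icc (0 : ℤ) (2 * B)) → ↥(Finset.Icc (-(N : ℤ)) (N : ℤ))) =>
          (t.2.2 f j : ℤ)) h
      have hm1 : bc n + (nc n - bc n) ∈ R := by
        have h' : bc n + (nc n - bc n) = nc n := by ring
        rw [h']
        exact hnc3 n
      have hm2 : bc n' + (nc n - bc n) ∈ R := by
        have h' : bc n' + (nc n - bc n) = nc n' := by rw [e2]; ring
        rw [h']
        exact hnc3 n'
      have hpat : ∀ f ∈ s, ∀ j : ℤ, 0 ≤ j → j < nc n - bc n →
          del φ x f (bc n + j) = del φ x f (bc n' + j) := by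
        intro f hf j hj1 hj2
        have hjmem : j ∈ Finset.Icc (0 : ℤ) (2 * B) := by
          refine Finset.mem_Icc.mpr ⟨hj1, ?_⟩
          have := hbc1 n; have := hnc2 n
          omega
        exact e3 ⟨f, hf⟩ ⟨j, hjmem⟩
      have hblk := (hK g hg).2.2 (bc n) (bc n') (nc n - bc n) (hbc3 n) (hbc3 n') hm1 hm2 hpat
        (n - bc n) (by have := hbc2 n; omega) (by have := hnc1 n; omega)
      calc del φ x g n = del φ x g (bc n + (n - bc n)) := by
            congr 1
            ring
        _ = del φ x g (bc n' + (n - bc n)) := hblk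
        _ = del φ x g n' := by
            congr 1
            rw [e1]
            ring
    · -- hbd
      intro g hg n
      have hc := (hK g hg).2.1
      have h1 := hc (bc n) (hbc3 n) n
      have h2 := hc (nc n) (hnc3 n) n
      have := hbc1 n; have := hbc2 n; have := hnc1 n; have := hnc2 n
      rw [Finset.mem_Icc]
      omega
    · -- injectivity from density
      intro g hg g' hg' hdd
      have hfull := (hK g hg).1
      have hfull' := (hK g' hg').1
      have heq : Set.EqOn (⇑g) (⇑g') (Set.range (om φ x)) := by
        rintro _ ⟨n, rfl⟩
        rw [del_spec (x := x) hfull n, del_spec (x := x) hfull' n, hdd n]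
      have hdor : Dense (Set.range (om φ x)) := hmin x
      have hfun : ⇑g = ⇑g' := Continuous.ext_on hdor g.continuous g'.continuous heq
      exact Homeomorph.ext (congrFun hfun)
end

section
/- Let Y ⊂ {a,b}^ℤ be the subshift of sequences not containing the pattern 'ba'. Identifying the non-constant elements of Y with ℤ (where n corresponds to the sequence whose transition from a to b occurs at position (n, n+1)), the topological full group ⟦Y⟧ is isomorphic to the group of permutations of ℤ that coincide with a translation outside a finite set. -/
variable {X : Type*} [TopologicalSpace X]

/-- The subshift over `{a, b}` (here `a = false`, `b = true`) of sequences avoiding the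
pattern `ba`. -/
def Yba : Set (ℤ → Bool) := {w | ∀ n : ℤ, ¬(w n = true ∧ w (n + 1) = false)}

/-- The shift homeomorphism on `Yba`. -/
def shiftY : ↥Yba ≃ₜ ↥Yba where
  toFun w := ⟨fun n => (w : ℤ → Bool) (n - 1), fun n => by simpa using w.2 (n - 1)⟩
  invFun w := ⟨fun n => (w : ℤ → Bool) (n + 1), fun n => w.2 (n + 1)⟩
  left_inv w := by ext n; simp
  right_inv w := by ext n; simp
  continuous_toFun := by
    apply Continuous.subtype_mk
    exact continuous_pi fun n => (continuous_apply (n - 1)).comp continuous_subtype_val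
  continuous_invFun := by
    apply Continuous.subtype_mk
    exact continuous_pi fun n => (continuous_apply (n + 1)).comp continuous_subtype_val

/-- The group of permutations of `ℤ` coinciding with a translation outside a finite
set. -/
def nearTranslations : Subgroup (Equiv.Perm ℤ) where
  carrier := {σ | ∃ k : ℤ, {n : ℤ | σ n ≠ n + k}.Finite}
  one_mem' := ⟨0, by simp⟩
  mul_mem' := by
    rintro σ τ ⟨k₁, h₁⟩ ⟨k₂, h₂⟩
    refine ⟨k₁ + k₂, ((h₁.preimage (τ.injective.injOn)).union h₂).subset ?_⟩
    intro n hn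
    simp only [Set.mem_setOf_eq] at hn
    by_contra hc
    simp only [Set.mem_union, Set.mem_preimage, Set.mem_setOf_eq, not_or, not_not] at hc
    apply hn
    have ht : τ n = n + k₂ := hc.2
    have hs : σ (τ n) = τ n + k₁ := hc.1
    show σ (τ n) = n + (k₁ + k₂)
    rw [hs, ht]; ring
  inv_mem' := by
    rintro σ ⟨k, h⟩
    refine ⟨-k, (h.image σ).subset ?_⟩
    intro n hn
    simp only [Set.mem_setOf_eq] at hn
    refine ⟨σ⁻¹ n, ?_, σ.apply_symm_apply n⟩
    simp only [Set.mem_setOf_eq]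
    intro heq
    apply hn
    have h2 : σ (σ⁻¹ n) = n := σ.apply_symm_apply n
    rw [h2] at heq
    omega


/-! ### Auxiliary material -/

lemma shift_zpow : ∀ (k : ℤ) (w : ↥Yba) (m : ℤ), ((shiftY ^ k) w).1 m = w.1 (m - k) := by
  intro k
  induction k using Int.induction_on with
  | zero => intro w m; simp
  | succ i ih =>
      intro w m
      rw [zpow_add_one, homeo_mul_apply]
      have : ((shiftY ^ (i : ℤ)) (shiftY w)).1 m = (shiftY w).1 (m - i) := ih (shiftY w) m
      rw [this]
      show w.1 (m - i - 1) = w.1 (m - (i + 1))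
      congr 1; ring
  | pred i ih =>
      intro w m
      rw [zpow_sub_one, homeo_mul_apply]
      have : ((shiftY ^ (-i : ℤ)) (shiftY⁻¹ w)).1 m = (shiftY⁻¹ w).1 (m - (-i)) :=
        ih (shiftY⁻¹ w) m
      rw [this]
      show w.1 (m - -i + 1) = w.1 (m - (-i - 1))
      congr 1; ring

/-- The step sequence with transition at `(n, n+1)`. -/
def step (n : ℤ) : ↥Yba :=
  ⟨fun m => decide (n < m), by
    intro m hm
    simp only [decide_eq_true_eq, decide_eq_false_iff_not] at hm
    omega⟩

lemma step_apply (n m : ℤ) : (step n).1 m = decide (n < m) := rfl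

lemma step_inj : Function.Injective step := by
  intro n n' h
  have h1 := congrArg (fun w : ↥Yba => w.1 (n + 1)) h
  have h2 := congrArg (fun w : ↥Yba => w.1 (n' + 1)) h
  simp only [step_apply, decide_eq_decide] at h1 h2
  omega

def cA : ↥Yba := ⟨fun _ => false, by simp [Yba]⟩
def cB : ↥Yba := ⟨fun _ => true, by simp [Yba]⟩

lemma yba_mono (w : ↥Yba) {m m' : ℤ} (h : m ≤ m') (ht : w.1 m = true) : w.1 m' = true := by
  refine Int.le_induction (motive := fun k _ => w.1 k = true) ht (fun n hn ih => ?_) m' h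
  by_contra hf
  exact w.2 n ⟨ih, by simpa using hf⟩

lemma yba_trichotomy (w : ↥Yba) : w = cA ∨ w = cB ∨ ∃ n, w = step n := by
  by_cases ha : ∀ m, w.1 m = false
  · exact Or.inl (Subtype.ext (funext ha))
  by_cases hb : ∀ m, w.1 m = true
  · exact Or.inr (Or.inl (Subtype.ext (funext hb)))
  push_neg at ha hb
  obtain ⟨m1, hm1⟩ := ha
  obtain ⟨m0, hm0⟩ := hb
  replace hm1 : w.1 m1 = true := by simpa using hm1
  replace hm0 : w.1 m0 = false := by simpa using hm0
  refine Or.inr (Or.inr ?_)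
  have hbdd : ∃ b : ℤ, ∀ z : ℤ, w.1 z = true → b ≤ z := by
    refine ⟨m0 + 1, fun z hz => ?_⟩
    by_contra hc
    push_neg at hc
    have := yba_mono w (by omega : z ≤ m0) hz
    rw [hm0] at this; exact Bool.false_ne_true this
  obtain ⟨lb, hlb, hmin⟩ := Int.exists_least_of_bdd
    (P := fun z => w.1 z = true) (by obtain ⟨b, hb'⟩ := hbdd; exact ⟨b, fun z hz => hb' z hz⟩)
    ⟨m1, hm1⟩
  refine ⟨lb - 1, Subtype.ext (funext fun m => ?_)⟩
  show w.1 m = decide (lb - 1 < m)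
  by_cases h : lb ≤ m
  · rw [yba_mono w h hlb]
    exact (decide_eq_true (by omega)).symm
  · push_neg at h
    have hf : w.1 m = false := by
      by_contra hc
      replace hc : w.1 m = true := by simpa using hc
      exact absurd (hmin m hc) (by omega)
    rw [hf]
    exact (decide_eq_false (by omega)).symm

lemma cA_ne_step (n : ℤ) : cA ≠ step n := by
  intro h
  have := congrArg (fun w : ↥Yba => w.1 (n + 1)) h
  simp [cA, step_apply] at this

lemma cB_ne_step (n : ℤ) : cB ≠ step n := by
  intro h
  have := congrArg (fun w : ↥Yba => w.1 n) h
  simp [cB, step_apply] at this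

lemma shift_zpow_step (k n : ℤ) : (shiftY ^ k) (step n) = step (n + k) := by
  refine Subtype.ext (funext fun m => ?_)
  rw [shift_zpow]
  show decide (n < m - k) = decide (n + k < m)
  exact decide_eq_decide.mpr (by omega)

lemma shift_zpow_cA (k : ℤ) : (shiftY ^ k) cA = cA :=
  Subtype.ext (funext fun m => by rw [shift_zpow]; rfl)

lemma shift_zpow_cB (k : ℤ) : (shiftY ^ k) cB = cB :=
  Subtype.ext (funext fun m => by rw [shift_zpow]; rfl)

open Classical in
noncomputable def idx (w : ↥Yba) : ℤ := if h : ∃ n, w = step n then h.choose else 0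

lemma idx_step (n : ℤ) : idx (step n) = n := by
  have h : ∃ n', step n = step n' := ⟨n, rfl⟩
  unfold idx
  rw [dif_pos h]
  exact (step_inj h.choose_spec.symm)


lemma onesided (σ : Equiv.Perm ℤ) (k₁ k₂ N : ℤ) (hN : 1 ≤ N)
    (h₁ : ∀ n, N ≤ n → σ n = n + k₁) (h₂ : ∀ n, n ≤ -N → σ n = n + k₂) : k₁ ≤ k₂ := by
  by_contra hlt
  push_neg at hlt
  have hsub : Finset.Ioo (-N + k₂) (N + k₁) ⊆ Finset.image σ (Finset.Ioo (-N) N) := by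
    intro m hm
    rw [Finset.mem_Ioo] at hm
    rw [Finset.mem_image]
    refine ⟨σ.symm m, ?_, σ.apply_symm_apply m⟩
    rw [Finset.mem_Ioo]
    have hmm := σ.apply_symm_apply m
    constructor
    · by_contra hc
      push_neg at hc
      have := h₂ _ hc
      rw [hmm] at this
      omega
    · by_contra hc
      push_neg at hc
      have := h₁ _ hc
      rw [hmm] at this
      omega
  have hcard := Finset.card_le_card hsub
  have hc1 : (Finset.Ioo (-N + k₂) (N + k₁)).card = (N + k₁ - (-N + k₂) - 1).toNat :=
    Int.card_Ioo _ _
  have hc2 : (Finset.image σ (Finset.Ioo (-N) N)).card ≤ (N - -N - 1).toNat := by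
    calc (Finset.image σ (Finset.Ioo (-N) N)).card ≤ (Finset.Ioo (-N) N).card :=
          Finset.card_image_le
      _ = (N - -N - 1).toNat := Int.card_Ioo _ _
  rw [hc1] at hcard
  omega

lemma twosided (σ : Equiv.Perm ℤ) (k₁ k₂ N : ℤ) (hN : 1 ≤ N)
    (h₁ : ∀ n, N ≤ n → σ n = n + k₁) (h₂ : ∀ n, n ≤ -N → σ n = n + k₂) : k₁ = k₂ := by
  have le1 : k₁ ≤ k₂ := onesided σ k₁ k₂ N hN h₁ h₂
  set τ : Equiv.Perm ℤ := (Equiv.neg ℤ).trans (σ.symm.trans (Equiv.neg ℤ)) with hτ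
  have hτapp : ∀ n, τ n = -(σ.symm (-n)) := fun n => rfl
  set N' : ℤ := max 1 (max (N - k₂) (N + k₁)) with hN'
  have le2 : k₂ ≤ k₁ := by
    refine onesided τ k₂ k₁ N' (le_max_left _ _) (fun n hn => ?_) (fun n hn => ?_)
    · have h1 : σ (-n - k₂) = -n := by
        rw [h₂ _ (by omega)]; ring
      have h2 : σ.symm (-n) = -n - k₂ := σ.symm_apply_eq.mpr h1.symm
      rw [hτapp, h2]; ring
    · have h1 : σ (-n - k₁) = -n := by
        rw [h₁ _ (by omega)]; ring
      have h2 : σ.symm (-n) = -n - k₁ := σ.symm_apply_eq.mpr h1.symm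
      rw [hτapp, h2]; ring
  omega


lemma stepImage {ψ : ↥Yba ≃ₜ ↥Yba} (h : ψ ∈ fullGroupZ shiftY) (n : ℤ) :
    ∃ m, ψ (step n) = step m := by
  obtain ⟨κ, _, e⟩ := h
  exact ⟨n + κ (step n), by rw [e, shift_zpow_step]⟩

lemma step_idx_image {ψ : ↥Yba ≃ₜ ↥Yba} (h : ψ ∈ fullGroupZ shiftY) (n : ℤ) :
    step (idx (ψ (step n))) = ψ (step n) := by
  obtain ⟨m, hm⟩ := stepImage h n
  rw [hm, idx_step]

lemma fixes_cA {ψ : ↥Yba ≃ₜ ↥Yba} (h : ψ ∈ fullGroupZ shiftY) : ψ cA = cA := by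
  obtain ⟨κ, _, e⟩ := h
  rw [e, shift_zpow_cA]

lemma fixes_cB {ψ : ↥Yba ≃ₜ ↥Yba} (h : ψ ∈ fullGroupZ shiftY) : ψ cB = cB := by
  obtain ⟨κ, _, e⟩ := h
  rw [e, shift_zpow_cB]

lemma inv_coe (g : ↥(fullGroupZ shiftY)) : ((g⁻¹ : ↥(fullGroupZ shiftY)) : ↥Yba ≃ₜ ↥Yba) = (g : ↥Yba ≃ₜ ↥Yba).symm := rfl

noncomputable def permOf (g : ↥(fullGroupZ shiftY)) : Equiv.Perm ℤ where
  toFun n := idx ((g : ↥Yba ≃ₜ ↥Yba) (step n))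
  invFun n := idx ((g : ↥Yba ≃ₜ ↥Yba).symm (step n))
  left_inv n := by
    show idx ((g : ↥Yba ≃ₜ ↥Yba).symm (step (idx ((g : ↥Yba ≃ₜ ↥Yba) (step n))))) = n
    rw [step_idx_image g.2 n, Homeomorph.symm_apply_apply, idx_step]
  right_inv n := by
    have hsymm : (g : ↥Yba ≃ₜ ↥Yba).symm ∈ fullGroupZ shiftY := by
      have := (g⁻¹).2
      rwa [inv_coe] at this
    show idx ((g : ↥Yba ≃ₜ ↥Yba) (step (idx ((g : ↥Yba ≃ₜ ↥Yba).symm (step n))))) = n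
    rw [step_idx_image hsymm n, Homeomorph.apply_symm_apply, idx_step]

lemma tail_cA (κ : ↥Yba → ℤ) (hlc : IsLocallyConstant κ) :
    ∃ T : ℤ, ∀ n, T ≤ n → κ (step n) = κ cA := by
  have hopen : IsOpen (κ ⁻¹' {κ cA}) := hlc _
  rw [isOpen_induced_iff] at hopen
  obtain ⟨U, hU, hUV⟩ := hopen
  have hmem : cA.1 ∈ U := by
    have : cA ∈ Subtype.val ⁻¹' U := by rw [hUV]; exact rfl
    exact this
  rw [isOpen_pi_iff] at hU
  obtain ⟨I, u, hIu, hpi⟩ := hU cA.1 hmem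
  refine ⟨(I.sup (fun j => j.natAbs) : ℕ), fun n hn => ?_⟩
  have hstep : (step n) ∈ Subtype.val ⁻¹' U := by
    apply hpi
    intro i hi
    have h1 : (step n).1 i = cA.1 i := by
      show decide (n < i) = false
      have : i.natAbs ≤ I.sup (fun j => j.natAbs) := Finset.le_sup hi
      exact decide_eq_false (by omega)
    rw [h1]
    exact (hIu i hi).2
  rw [hUV] at hstep
  exact hstep

lemma tail_cB (κ : ↥Yba → ℤ) (hlc : IsLocallyConstant κ) :
    ∃ T : ℤ, ∀ n, n ≤ T → κ (step n) = κ cB := by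
  have hopen : IsOpen (κ ⁻¹' {κ cB}) := hlc _
  rw [isOpen_induced_iff] at hopen
  obtain ⟨U, hU, hUV⟩ := hopen
  have hmem : cB.1 ∈ U := by
    have : cB ∈ Subtype.val ⁻¹' U := by rw [hUV]; exact rfl
    exact this
  rw [isOpen_pi_iff] at hU
  obtain ⟨I, u, hIu, hpi⟩ := hU cB.1 hmem
  refine ⟨-(I.sup (fun j => j.natAbs) : ℕ) - 1, fun n hn => ?_⟩
  have hstep : (step n) ∈ Subtype.val ⁻¹' U := by
    apply hpi
    intro i hi
    have h1 : (step n).1 i = cB.1 i := by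
      show decide (n < i) = true
      have : i.natAbs ≤ I.sup (fun j => j.natAbs) := Finset.le_sup hi
      exact decide_eq_true (by omega)
    rw [h1]
    exact (hIu i hi).2
  rw [hUV] at hstep
  exact hstep

lemma permOf_apply_eq (g : ↥(fullGroupZ shiftY)) (κ : ↥Yba → ℤ)
    (e : ∀ w, (g : ↥Yba ≃ₜ ↥Yba) w = (shiftY ^ κ w) w) (n : ℤ) :
    permOf g n = n + κ (step n) := by
  show idx ((g : ↥Yba ≃ₜ ↥Yba) (step n)) = n + κ (step n)
  rw [e, shift_zpow_step, idx_step]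

lemma permOf_mem (g : ↥(fullGroupZ shiftY)) : permOf g ∈ nearTranslations := by
  obtain ⟨κ, hlc, e⟩ := g.2
  obtain ⟨Ta, hTa⟩ := tail_cA κ hlc
  obtain ⟨Tb, hTb⟩ := tail_cB κ hlc
  set N : ℤ := max 1 (max Ta (-Tb)) with hN
  have hNa : Ta ≤ N := le_trans (le_max_left _ _) (le_max_right _ _)
  have hNb : -Tb ≤ N := le_trans (le_max_right _ _) (le_max_right _ _)
  have hupper : ∀ n, N ≤ n → permOf g n = n + κ cA := fun n hn => by
    rw [permOf_apply_eq g κ e, hTa n (by omega)]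
  have hlower : ∀ n, n ≤ -N → permOf g n = n + κ cB := fun n hn => by
    rw [permOf_apply_eq g κ e, hTb n (by omega)]
  have hk : κ cA = κ cB := twosided (permOf g) _ _ N (le_max_left _ _) hupper hlower
  refine ⟨κ cA, Set.Finite.subset (Set.finite_Icc (-N) N) ?_⟩
  intro n hn
  simp only [Set.mem_setOf_eq] at hn
  by_contra hc
  simp only [Set.mem_Icc, not_and_or, not_le] at hc
  rcases hc with hc | hc
  · exact hn (by rw [hlower n (by omega), hk])
  · exact hn (hupper n (by omega))


open Classical in
noncomputable def kap (σ : Equiv.Perm ℤ) (k : ℤ) : ↥Yba → ℤ :=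
  fun w => if h : ∃ n, w = step n then σ h.choose - h.choose else k

lemma kap_step (σ : Equiv.Perm ℤ) (k n : ℤ) : kap σ k (step n) = σ n - n := by
  have h : ∃ n', step n = step n' := ⟨n, rfl⟩
  unfold kap
  rw [dif_pos h]
  have hc : h.choose = n := step_inj h.choose_spec.symm
  rw [hc]

lemma kap_cA (σ : Equiv.Perm ℤ) (k : ℤ) : kap σ k cA = k := by
  unfold kap
  rw [dif_neg]
  rintro ⟨n, hn⟩
  exact cA_ne_step n hn

lemma kap_cB (σ : Equiv.Perm ℤ) (k : ℤ) : kap σ k cB = k := by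
  unfold kap
  rw [dif_neg]
  rintro ⟨n, hn⟩
  exact cB_ne_step n hn

lemma coord_open (m : ℤ) (c : Bool) : IsOpen {w' : ↥Yba | w'.1 m = c} := by
  have hcont : Continuous (fun w' : ↥Yba => w'.1 m) :=
    (continuous_apply m).comp continuous_subtype_val
  exact (isOpen_discrete {c}).preimage hcont

lemma kap_lc (σ : Equiv.Perm ℤ) (k : ℤ) (hF : {n | σ n ≠ n + k}.Finite) :
    IsLocallyConstant (kap σ k) := by
  rw [IsLocallyConstant.iff_exists_open]
  intro w
  rcases yba_trichotomy w with rfl | rfl | ⟨n, rfl⟩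
  · set B : ℤ := ((hF.toFinset.sup (fun j => j.natAbs) : ℕ) : ℤ) with hB
    refine ⟨{w' | w'.1 (B + 1) = false}, coord_open _ _, rfl, ?_⟩
    intro w' hw'
    rcases yba_trichotomy w' with rfl | rfl | ⟨m, rfl⟩
    · rfl
    · exact absurd hw' (by simp [cB])
    · have hm : ¬(m < B + 1) := by simpa [step_apply] using hw'
      have hσm : σ m = m + k := by
        by_contra h'
        have h1 : m ∈ hF.toFinset := hF.mem_toFinset.mpr h'
        have h2 : m.natAbs ≤ hF.toFinset.sup (fun j => j.natAbs) := Finset.le_sup h1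
        omega
      rw [kap_step, kap_cA, hσm]
      ring
  · set B : ℤ := ((hF.toFinset.sup (fun j => j.natAbs) : ℕ) : ℤ) with hB
    refine ⟨{w' | w'.1 (-(B + 1)) = true}, coord_open _ _, rfl, ?_⟩
    intro w' hw'
    rcases yba_trichotomy w' with rfl | rfl | ⟨m, rfl⟩
    · exact absurd hw' (by simp [cA])
    · rfl
    · have hm : m < -(B + 1) := by simpa [step_apply] using hw'
      have hσm : σ m = m + k := by
        by_contra h'
        have h1 : m ∈ hF.toFinset := hF.mem_toFinset.mpr h'
        have h2 : m.natAbs ≤ hF.toFinset.sup (fun j => j.natAbs) := Finset.le_sup h1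
        omega
      rw [kap_step, kap_cB, hσm]
      ring
  · refine ⟨{w' | w'.1 n = false} ∩ {w' | w'.1 (n + 1) = true},
      (coord_open _ _).inter (coord_open _ _), ?_, ?_⟩
    · constructor
      · show (step n).1 n = false
        simp [step_apply]
      · show (step n).1 (n + 1) = true
        simp [step_apply]
    · rintro w' ⟨h1, h2⟩
      rcases yba_trichotomy w' with rfl | rfl | ⟨m, rfl⟩
      · exact absurd h2 (by simp [cA])
      · exact absurd h1 (by simp [cB])
      · have e1 : ¬(m < n) := by simpa [step_apply] using h1
        have e2 : m < n + 1 := by simpa [step_apply] using h2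
        have : m = n := by omega
        rw [this]

noncomputable def psiFun (σ : Equiv.Perm ℤ) (k : ℤ) : ↥Yba → ↥Yba :=
  fun w => (shiftY ^ kap σ k w) w

lemma psiFun_step (σ : Equiv.Perm ℤ) (k n : ℤ) : psiFun σ k (step n) = step (σ n) := by
  unfold psiFun
  rw [kap_step, shift_zpow_step]
  congr 1
  ring

lemma psiFun_cA (σ : Equiv.Perm ℤ) (k : ℤ) : psiFun σ k cA = cA := shift_zpow_cA _

lemma psiFun_cB (σ : Equiv.Perm ℤ) (k : ℤ) : psiFun σ k cB = cB := shift_zpow_cB _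

lemma psiFun_inv (σ : Equiv.Perm ℤ) (k : ℤ) (w : ↥Yba) :
    psiFun σ.symm (-k) (psiFun σ k w) = w := by
  rcases yba_trichotomy w with rfl | rfl | ⟨n, rfl⟩
  · rw [psiFun_cA, psiFun_cA]
  · rw [psiFun_cB, psiFun_cB]
  · rw [psiFun_step, psiFun_step, Equiv.symm_apply_apply]

lemma psiFun_continuous (σ : Equiv.Perm ℤ) (k : ℤ) (hF : {n | σ n ≠ n + k}.Finite) :
    Continuous (psiFun σ k) := by
  rw [continuous_iff_continuousAt]
  intro w
  obtain ⟨U, hUo, hUw, hUc⟩ := (IsLocallyConstant.iff_exists_open _).mp (kap_lc σ k hF) w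
  have hc : ContinuousAt (fun w' => (shiftY ^ kap σ k w) w') w :=
    (Homeomorph.continuous _).continuousAt
  apply hc.congr
  refine Filter.eventuallyEq_of_mem (hUo.mem_nhds hUw) (fun w' hw' => ?_)
  show (shiftY ^ kap σ k w) w' = psiFun σ k w'
  unfold psiFun
  rw [hUc w' hw']

lemma symm_finite (σ : Equiv.Perm ℤ) (k : ℤ) (hF : {n | σ n ≠ n + k}.Finite) :
    {n | σ.symm n ≠ n + (-k)}.Finite := by
  refine (hF.image σ).subset ?_
  intro n hn
  simp only [Set.mem_setOf_eq] at hn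
  refine ⟨σ.symm n, ?_, σ.apply_symm_apply n⟩
  simp only [Set.mem_setOf_eq]
  intro heq
  apply hn
  have h2 : σ (σ.symm n) = n := σ.apply_symm_apply n
  rw [heq] at h2
  omega

noncomputable def psiHom (σ : Equiv.Perm ℤ) (k : ℤ) (hF : {n | σ n ≠ n + k}.Finite) :
    ↥Yba ≃ₜ ↥Yba where
  toFun := psiFun σ k
  invFun := psiFun σ.symm (-k)
  left_inv := psiFun_inv σ k
  right_inv w := by
    have := psiFun_inv σ.symm (-k) w
    rwa [Equiv.symm_symm, neg_neg] at this
  continuous_toFun := psiFun_continuous σ k hF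
  continuous_invFun := psiFun_continuous σ.symm (-k) (symm_finite σ k hF)

noncomputable def Phi : ↥(fullGroupZ shiftY) →* ↥nearTranslations where
  toFun g := ⟨permOf g, permOf_mem g⟩
  map_one' := by
    apply Subtype.ext
    apply Equiv.ext
    intro n
    show idx (((1 : ↥(fullGroupZ shiftY)) : ↥Yba ≃ₜ ↥Yba) (step n)) = n
    rw [OneMemClass.coe_one, homeo_one_apply, idx_step]
  map_mul' g h := by
    apply Subtype.ext
    apply Equiv.ext
    intro n
    show idx (((g * h : ↥(fullGroupZ shiftY)) : ↥Yba ≃ₜ ↥Yba) (step n)) =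
      idx ((g : ↥Yba ≃ₜ ↥Yba) (step (idx ((h : ↥Yba ≃ₜ ↥Yba) (step n)))))
    rw [step_idx_image h.2 n]
    rfl

lemma Phi_injective : Function.Injective Phi := by
  intro g g' hgg
  have hperm : ∀ n, permOf g n = permOf g' n := by
    intro n
    have := congrArg (fun x : ↥nearTranslations => (x : Equiv.Perm ℤ) n) hgg
    exact this
  have hstep : ∀ n, (g : ↥Yba ≃ₜ ↥Yba) (step n) = (g' : ↥Yba ≃ₜ ↥Yba) (step n) := by
    intro n
    rw [← step_idx_image g.2 n, ← step_idx_image g'.2 n]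
    exact congrArg step (hperm n)
  apply Subtype.ext
  apply Homeomorph.ext
  intro w
  rcases yba_trichotomy w with rfl | rfl | ⟨n, rfl⟩
  · rw [fixes_cA g.2, fixes_cA g'.2]
  · rw [fixes_cB g.2, fixes_cB g'.2]
  · exact hstep n

lemma Phi_surjective : Function.Surjective Phi := by
  rintro ⟨σ, hσ⟩
  obtain ⟨k, hF⟩ := hσ
  have hmem : psiHom σ k hF ∈ fullGroupZ shiftY :=
    ⟨kap σ k, kap_lc σ k hF, fun w => rfl⟩
  refine ⟨⟨psiHom σ k hF, hmem⟩, ?_⟩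
  apply Subtype.ext
  apply Equiv.ext
  intro n
  show idx ((psiHom σ k hF) (step n)) = σ n
  have : (psiHom σ k hF) (step n) = step (σ n) := psiFun_step σ k n
  rw [this, idx_step]

/-- the topological full group of the subshift `Yba` is isomorphic to the
group of permutations of `ℤ` that coincide with a translation outside a finite set. -/
theorem statement17 : Nonempty (↥(fullGroupZ shiftY) ≃* ↥nearTranslations) := by
  exact ⟨MulEquiv.ofBijective Phi ⟨Phi_injective, Phi_surjective⟩⟩
end
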